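/- Let $H$ be a $k$-graph and let $T$ be an $(\ell-1,\vec{s},\vec{t})$-transporter in $H$ with underlying edges $s$ and $t$. Then every edge $e\in E(T)\setminus\{s,t\}$ lies in exactly one sending cycle and exactly one receiving cycle of $T$, the edge $s$ lies in exactly $k$ sending cycles and no receiving cycle, and the edge $t$ lies in exactly $k$ receiving cycles and no sending cycle. Consequently, if $\omega'$ is obtained from $\omega\colon\mathcal{C}_{\ell-1}(H)\to\mathbb{R}$ by using $T$ with weight $w$, then for every edge $e$ of $H$, $\sum_{C: e\in E(C)}\omega'(C) = \sum_{C: e\in E(C)}\omega(C) - w\,\mathbf{1}[e=s] + w\,\mathbf{1}[e=t]$. -/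

import Mathlib

namespace Stmt13

variable {V : Type} [Fintype V] [DecidableEq V]

/-- The `k`-window (as a vertex set) of the cyclic vertex sequence
`v : ZMod (k·ℓ) → V` starting at position `i`; these windows are the edges of the
closed walk encoded by `v`. -/
def win (k ℓ : ℕ) (v : ZMod (k * ℓ) → V) (i : ℕ) : Finset V :=
  Finset.univ.image fun j : Fin k => v ((i + j.1 : ℕ) : ZMod (k * ℓ))

/-- Edge set of the `i`-th sending cycle of the transporter encoded by `v`:
the edges `e_{iℓ}, …, e_{iℓ+⌊ℓ/2⌋-1}` together with
`e_{(i-1)ℓ+⌊ℓ/2⌋+1}, …, e_{iℓ-1}` (indices mod `kℓ`, and `i-1` taken mod `k`). -/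
def SC (k ℓ : ℕ) (v : ZMod (k * ℓ) → V) (i : ℕ) : Finset (Finset V) :=
  ((Finset.range (ℓ / 2)).image fun a => win k ℓ v (i * ℓ + a)) ∪
  ((Finset.range (ℓ - ℓ / 2 - 1)).image fun a =>
    win k ℓ v ((i + (k - 1)) * ℓ + ℓ / 2 + 1 + a))

/-- Edge set of the `i`-th receiving cycle of the transporter encoded by `v`:
the edges `e_{iℓ+⌊ℓ/2⌋}, …, e_{(i+1)ℓ-1}` together with
`e_{iℓ+1}, …, e_{iℓ+⌊ℓ/2⌋-1}` (indices mod `kℓ`). -/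
def RC (k ℓ : ℕ) (v : ZMod (k * ℓ) → V) (i : ℕ) : Finset (Finset V) :=
  ((Finset.range (ℓ - ℓ / 2)).image fun a => win k ℓ v (i * ℓ + ℓ / 2 + a)) ∪
  ((Finset.range (ℓ / 2 - 1)).image fun a => win k ℓ v (i * ℓ + 1 + a))

/-- Edge set `E(T)` of the transporter encoded by `v`. -/
def ET (k ℓ : ℕ) (v : ZMod (k * ℓ) → V) : Finset (Finset V) :=
  (Finset.range (k * ℓ)).image fun i => win k ℓ v i

set_option linter.unusedSectionVars false

section Aux

variable {k ℓ : ℕ} {s t : Fin k → V} {v : ZMod (k * ℓ) → V}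

/-- vertex at an integer position -/
def VV (k ℓ : ℕ) (v : ZMod (k * ℓ) → V) (x : ℕ) : V := v ((x : ℕ) : ZMod (k * ℓ))

lemma win_eq (k ℓ : ℕ) (v : ZMod (k * ℓ) → V) (p : ℕ) :
    win k ℓ v p = Finset.univ.image fun j : Fin k => VV k ℓ v (p + j.1) := rfl

lemma mem_win {p : ℕ} {x : V} :
    x ∈ win k ℓ v p ↔ ∃ j, j < k ∧ VV k ℓ v (p + j) = x := by
  constructor
  · intro hx
    obtain ⟨j, -, hj⟩ := Finset.mem_image.mp hx
    exact ⟨j.1, j.2, hj⟩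
  · rintro ⟨j, hj, hx⟩
    exact Finset.mem_image.mpr ⟨⟨j, hj⟩, Finset.mem_univ _, hx⟩

lemma VV_congr {x y : ℕ} (h : x ≡ y [MOD k * ℓ]) : VV k ℓ v x = VV k ℓ v y :=
  congrArg v ((ZMod.natCast_eq_natCast_iff _ _ _).mpr h)

lemma win_congr {p q : ℕ} (h : p ≡ q [MOD k * ℓ]) : win k ℓ v p = win k ℓ v q := by
  rw [win_eq, win_eq]
  apply Finset.image_congr
  intro j _
  exact VV_congr (h.add_right j.1)

lemma dm_div (ℓ i c : ℕ) (hl : 0 < ℓ) (hc : c < ℓ) : (i * ℓ + c) / ℓ = i := by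
  rw [add_comm, Nat.add_mul_div_right _ _ hl, Nat.div_eq_of_lt hc, zero_add]

lemma dm_mod (ℓ i c : ℕ) (hc : c < ℓ) : (i * ℓ + c) % ℓ = c := by
  rw [add_comm, Nat.add_mul_mod_self_right, Nat.mod_eq_of_lt hc]

lemma modN (k ℓ x : ℕ) : x % (k * ℓ) = (x / ℓ % k) * ℓ + x % ℓ := by
  have h1 : x % (k * ℓ) / ℓ = x / ℓ % k := by
    rw [mul_comm]; exact Nat.mod_mul_right_div_self x ℓ k
  have h2 : x % (k * ℓ) % ℓ = x % ℓ := Nat.mod_mod_of_dvd x (dvd_mul_left ℓ k)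
  conv_lhs => rw [← Nat.div_add_mod (x % (k * ℓ)) ℓ]
  rw [h1, h2, mul_comm]

lemma modNEq (k ℓ x : ℕ) : x ≡ (x / ℓ % k) * ℓ + x % ℓ [MOD k * ℓ] := by
  rw [← modN]; exact (Nat.mod_modEq _ _).symm

lemma exists_shift {k : ℕ} (hk : 0 < k) (r a : ℕ) (ha : a < k) :
    ∃ j, j < k ∧ (r + j) % k = a := by
  have hrk : r % k < k := Nat.mod_lt _ hk
  rcases le_or_gt (r % k) a with h | h
  · refine ⟨a - r % k, by omega, ?_⟩
    rw [← Nat.mod_add_mod]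
    have e : r % k + (a - r % k) = a := by omega
    rw [e, Nat.mod_eq_of_lt ha]
  · refine ⟨a + k - r % k, by omega, ?_⟩
    rw [← Nat.mod_add_mod]
    have e : r % k + (a + k - r % k) = a + k := by omega
    rw [e, Nat.add_mod_right, Nat.mod_eq_of_lt ha]


lemma lt_N {k ℓ r c : ℕ} (hr : r < k) (hcl : c < ℓ) : r * ℓ + c < k * ℓ :=
  calc r * ℓ + c < r * ℓ + ℓ := by omega
  _ = (r + 1) * ℓ := by ring
  _ ≤ k * ℓ := Nat.mul_le_mul_right ℓ (by omega)

def arc (f : Fin k → V) (hk : 0 < k) (u L : ℕ) : Finset V :=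
  (Finset.range L).image fun i => f ⟨(u + i) % k, Nat.mod_lt _ hk⟩

lemma mem_arc {f : Fin k → V} {hk : 0 < k} {u L : ℕ} {x : V} :
    x ∈ arc f hk u L ↔ ∃ i, i < L ∧ f ⟨(u + i) % k, Nat.mod_lt _ hk⟩ = x := by
  simp [arc, Finset.mem_image]

lemma arc_card {f : Fin k → V} (hf : Function.Injective f) (hk : 0 < k) (u L : ℕ)
    (hL : L ≤ k) : (arc f hk u L).card = L := by
  rw [arc, Finset.card_image_of_injOn, Finset.card_range]
  intro i hi i' hi' h
  simp only [Finset.coe_range, Set.mem_Iio] at hi hi'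
  have h2 : (u + i) % k = (u + i') % k := congrArg Fin.val (hf h)
  have h3 : i ≡ i' [MOD k] := Nat.ModEq.add_left_cancel' u h2
  rw [Nat.ModEq, Nat.mod_eq_of_lt (by omega), Nat.mod_eq_of_lt (by omega)] at h3
  exact h3

lemma arc_inj {f : Fin k → V} (hf : Function.Injective f) (hk : 0 < k) {u u' L L' : ℕ}
    (hL : 0 < L) (hLk : L < k) (hL' : 0 < L') (hL'k : L' < k)
    (h : arc f hk u L = arc f hk u' L') : L = L' ∧ u % k = u' % k := by
  have hcard : L = L' := by
    have hc := congrArg Finset.card h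
    rwa [arc_card hf hk u L hLk.le, arc_card hf hk u' L' hL'k.le] at hc
  subst hcard
  refine ⟨rfl, ?_⟩
  have h1 : ∃ r, r < L ∧ (u + r) % k = (u' + 0) % k := by
    have hm : f ⟨(u' + 0) % k, Nat.mod_lt _ hk⟩ ∈ arc f hk u L := by
      rw [h]; exact mem_arc.mpr ⟨0, hL, rfl⟩
    obtain ⟨r, hr, hfr⟩ := mem_arc.mp hm
    exact ⟨r, hr, congrArg Fin.val (hf hfr)⟩
  have h2 : ∃ r', r' < L ∧ (u' + r') % k = (u + 0) % k := by
    have hm : f ⟨(u + 0) % k, Nat.mod_lt _ hk⟩ ∈ arc f hk u' L := by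
      rw [← h]; exact mem_arc.mpr ⟨0, hL, rfl⟩
    obtain ⟨r, hr, hfr⟩ := mem_arc.mp hm
    exact ⟨r, hr, congrArg Fin.val (hf hfr)⟩
  obtain ⟨r, hr, hru⟩ := h1
  obtain ⟨r', hr', hr'u⟩ := h2
  rw [add_zero] at hru hr'u
  have e1 : u + r ≡ u' [MOD k] := hru
  have e2 : u' + r' ≡ u [MOD k] := hr'u
  have e3 : u + (r + r') ≡ u + 0 [MOD k] := by
    calc u + (r + r') = (u + r) + r' := by ring
    _ ≡ u' + r' [MOD k] := e1.add_right r'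
    _ ≡ u [MOD k] := e2
    _ = u + 0 := by ring
  have e5 : k ∣ r + r' := Nat.modEq_zero_iff_dvd.mp (Nat.ModEq.add_left_cancel' u e3)
  rcases Nat.eq_zero_or_pos (r + r') with h0 | hpos
  · have hr0 : r = 0 := by omega
    subst hr0
    simpa [Nat.ModEq] using e1
  · have hk2 : r + r' = k := by
      obtain ⟨c, hc⟩ := e5
      have hc1 : c ≠ 0 := by rintro rfl; omega
      rcases Nat.lt_or_ge c 2 with h' | h'
      · have hc2 : c = 1 := by omega
        subst hc2; omega
      · have : k * 2 ≤ k * c := Nat.mul_le_mul_left k h'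
        omega
    have hr1 : 1 ≤ r := by omega
    have hmem : f ⟨(u + (r - 1)) % k, Nat.mod_lt _ hk⟩ ∈ arc f hk u' L := by
      rw [← h]; exact mem_arc.mpr ⟨r - 1, by omega, rfl⟩
    obtain ⟨i, hi, hif⟩ := mem_arc.mp hmem
    have e6 : u' + i ≡ u + (r - 1) [MOD k] := congrArg Fin.val (hf hif)
    have e7 : u' + i + 1 ≡ u + r [MOD k] := by
      have e : u + (r - 1) + 1 = u + r := by omega
      calc u' + i + 1 ≡ u + (r - 1) + 1 [MOD k] := e6.add_right 1
      _ = u + r := e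
    have e8 : u' + (i + 1) ≡ u' + 0 [MOD k] := by
      calc u' + (i + 1) = u' + i + 1 := by ring
      _ ≡ u + r [MOD k] := e7
      _ ≡ u' [MOD k] := e1
      _ = u' + 0 := by ring
    have e9 : k ∣ i + 1 := Nat.modEq_zero_iff_dvd.mp (Nat.ModEq.add_left_cancel' u' e8)
    have := Nat.le_of_dvd (by omega) e9
    omega


/-- Bundled, position-based form of the transporter hypotheses. -/
structure Ctx (k ℓ : ℕ) (s t : Fin k → V) (v : ZMod (k * ℓ) → V) : Prop where
  hk : 2 ≤ k
  hl : 4 ≤ ℓ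
  hs : Function.Injective s
  ht : Function.Injective t
  hst : Disjoint (Finset.univ.image s) (Finset.univ.image t)
  hS : ∀ x : ℕ, x % ℓ < k →
    VV k ℓ v x = s ⟨(x / ℓ + x % ℓ) % k, Nat.mod_lt _ (Nat.lt_of_lt_of_le Nat.zero_lt_two hk)⟩
  hT : ∀ x : ℕ, ℓ / 2 ≤ x % ℓ → x % ℓ < ℓ / 2 + k →
    VV k ℓ v x = t ⟨(x / ℓ + (x % ℓ - ℓ / 2)) % k, Nat.mod_lt _ (Nat.lt_of_lt_of_le Nat.zero_lt_two hk)⟩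
  hself : ∀ x y : ℕ, x < k * ℓ → y < k * ℓ → x / ℓ = y / ℓ → x ≠ y →
    VV k ℓ v x ≠ VV k ℓ v y
  hmeet : ∀ x y : ℕ, x < k * ℓ → y < k * ℓ → x / ℓ ≠ y / ℓ → VV k ℓ v x = VV k ℓ v y →
    VV k ℓ v x ∈ Finset.univ.image s ∪ Finset.univ.image t
  hkm : k ≤ ℓ / 2
  hkn : ℓ / 2 + k ≤ ℓ

namespace Ctx

variable (hc : Ctx k ℓ s t v)
include hc

lemma hk0 : 0 < k := by have := hc.hk; omega

lemma hl0 : 0 < ℓ := by have := hc.hl; omega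

lemma h2k : 2 * k ≤ ℓ := by have h1 := hc.hkm; have h2 := hc.hkn; omega

lemma sne (a b : Fin k) : s a ≠ t b := by
  intro h
  exact Finset.disjoint_left.mp hc.hst
    (Finset.mem_image_of_mem s (Finset.mem_univ a))
    (h ▸ Finset.mem_image_of_mem t (Finset.mem_univ b))

lemma memS (x : ℕ) (h : x % ℓ < k) : VV k ℓ v x ∈ Finset.univ.image s := by
  rw [hc.hS x h]; exact Finset.mem_image_of_mem s (Finset.mem_univ _)

lemma memT (x : ℕ) (h1 : ℓ / 2 ≤ x % ℓ) (h2 : x % ℓ < ℓ / 2 + k) :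
    VV k ℓ v x ∈ Finset.univ.image t := by
  rw [hc.hT x h1 h2]; exact Finset.mem_image_of_mem t (Finset.mem_univ _)

lemma notST (x : ℕ) (h1 : k ≤ x % ℓ) (h2 : x % ℓ < ℓ / 2 ∨ ℓ / 2 + k ≤ x % ℓ) :
    VV k ℓ v x ∉ Finset.univ.image s ∧ VV k ℓ v x ∉ Finset.univ.image t := by
  have hl0 := hc.hl0
  have hxl : x % ℓ < ℓ := Nat.mod_lt _ hl0
  constructor
  · intro hmem
    obtain ⟨a, -, ha⟩ := Finset.mem_image.mp hmem
    obtain ⟨j, hj, hidx⟩ := exists_shift hc.hk0 (x / ℓ % k) a.1 a.2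
    set y := (x / ℓ % k) * ℓ + j with hy
    have hyd : y / ℓ = x / ℓ % k := dm_div ℓ _ _ hl0 (by omega)
    have hym : y % ℓ = j := dm_mod ℓ _ _ (by omega)
    have hvy : VV k ℓ v y = s a := by
      rw [hc.hS y (by omega)]
      exact congrArg s (Fin.ext (by rw [hyd, hym]; exact hidx))
    have hx' : VV k ℓ v (x % (k * ℓ)) = VV k ℓ v y := by
      rw [VV_congr (Nat.mod_modEq x (k * ℓ)), ← ha, hvy]
    refine hc.hself (x % (k * ℓ)) y ?_ ?_ ?_ ?_ hx'
    · exact Nat.mod_lt _ (Nat.mul_pos hc.hk0 hl0)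
    · exact lt_N (Nat.mod_lt _ hc.hk0) (by omega)
    · rw [modN k ℓ x, dm_div ℓ _ _ hl0 (Nat.mod_lt _ hl0), hyd]
    · intro heq
      have : (x % (k * ℓ)) % ℓ = y % ℓ := by rw [heq]
      rw [Nat.mod_mod_of_dvd x (dvd_mul_left ℓ k), hym] at this
      omega
  · intro hmem
    obtain ⟨a, -, ha⟩ := Finset.mem_image.mp hmem
    obtain ⟨j, hj, hidx⟩ := exists_shift hc.hk0 (x / ℓ % k) a.1 a.2
    have hkn := hc.hkn
    set y := (x / ℓ % k) * ℓ + (ℓ / 2 + j) with hy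
    have hyd : y / ℓ = x / ℓ % k := dm_div ℓ _ _ hl0 (by omega)
    have hym : y % ℓ = ℓ / 2 + j := dm_mod ℓ _ _ (by omega)
    have hvy : VV k ℓ v y = t a := by
      rw [hc.hT y (by omega) (by omega)]
      refine congrArg t (Fin.ext ?_)
      rw [hyd, hym]
      have : ℓ / 2 + j - ℓ / 2 = j := by omega
      rw [this]; exact hidx
    have hx' : VV k ℓ v (x % (k * ℓ)) = VV k ℓ v y := by
      rw [VV_congr (Nat.mod_modEq x (k * ℓ)), ← ha, hvy]
    refine hc.hself (x % (k * ℓ)) y ?_ ?_ ?_ ?_ hx'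
    · exact Nat.mod_lt _ (Nat.mul_pos hc.hk0 hl0)
    · exact lt_N (Nat.mod_lt _ hc.hk0) (by omega)
    · rw [modN k ℓ x, dm_div ℓ _ _ hl0 (Nat.mod_lt _ hl0), hyd]
    · intro heq
      have : (x % (k * ℓ)) % ℓ = y % ℓ := by rw [heq]
      rw [Nat.mod_mod_of_dvd x (dvd_mul_left ℓ k), hym] at this
      omega

lemma inS_iff (x : ℕ) : VV k ℓ v x ∈ Finset.univ.image s ↔ x % ℓ < k := by
  constructor
  · intro h
    by_contra h'
    push_neg at h'
    have hkm := hc.hkm; have hkn := hc.hkn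
    rcases Nat.lt_or_ge (x % ℓ) (ℓ / 2) with h2 | h2
    · exact (hc.notST x h' (Or.inl h2)).1 h
    · rcases Nat.lt_or_ge (x % ℓ) (ℓ / 2 + k) with h3 | h3
      · exact Finset.disjoint_left.mp hc.hst h (hc.memT x h2 h3)
      · exact (hc.notST x h' (Or.inr h3)).1 h
  · exact hc.memS x

lemma inT_iff (x : ℕ) : VV k ℓ v x ∈ Finset.univ.image t ↔
    (ℓ / 2 ≤ x % ℓ ∧ x % ℓ < ℓ / 2 + k) := by
  constructor
  · intro h
    by_contra h'
    push_neg at h'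
    have hkm := hc.hkm; have hkn := hc.hkn
    rcases Nat.lt_or_ge (x % ℓ) k with h2 | h2
    · exact Finset.disjoint_left.mp hc.hst (hc.memS x h2) h
    · rcases Nat.lt_or_ge (x % ℓ) (ℓ / 2) with h3 | h3
      · exact (hc.notST x h2 (Or.inl h3)).2 h
      · exact (hc.notST x h2 (Or.inr (by omega))).2 h
  · rintro ⟨h1, h2⟩
    exact hc.memT x h1 h2

lemma sIdx {x y : ℕ} (hx : x % ℓ < k) (hy : y % ℓ < k) (h : VV k ℓ v x = VV k ℓ v y) :
    (x / ℓ + x % ℓ) % k = (y / ℓ + y % ℓ) % k := by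
  rw [hc.hS x hx, hc.hS y hy] at h
  exact congrArg Fin.val (hc.hs h)

lemma tIdx {x y : ℕ} (hx1 : ℓ / 2 ≤ x % ℓ) (hx2 : x % ℓ < ℓ / 2 + k)
    (hy1 : ℓ / 2 ≤ y % ℓ) (hy2 : y % ℓ < ℓ / 2 + k) (h : VV k ℓ v x = VV k ℓ v y) :
    (x / ℓ + (x % ℓ - ℓ / 2)) % k = (y / ℓ + (y % ℓ - ℓ / 2)) % k := by
  rw [hc.hT x hx1 hx2, hc.hT y hy1 hy2] at h
  exact congrArg Fin.val (hc.ht h)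

lemma intUniq {x y : ℕ} (h1 : k ≤ x % ℓ) (h2 : x % ℓ < ℓ / 2 ∨ ℓ / 2 + k ≤ x % ℓ)
    (h : VV k ℓ v x = VV k ℓ v y) : x % ℓ = y % ℓ ∧ x / ℓ % k = y / ℓ % k := by
  have hl0 := hc.hl0
  have hN0 : 0 < k * ℓ := by have := hc.hk0; positivity
  set x' := x % (k * ℓ) with hx'
  set y' := y % (k * ℓ) with hy'
  have hxm : x' % ℓ = x % ℓ := Nat.mod_mod_of_dvd x (dvd_mul_left ℓ k)
  have hym : y' % ℓ = y % ℓ := Nat.mod_mod_of_dvd y (dvd_mul_left ℓ k)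
  have hxd : x' / ℓ = x / ℓ % k := by rw [hx', mul_comm]; exact Nat.mod_mul_right_div_self x ℓ k
  have hyd : y' / ℓ = y / ℓ % k := by rw [hy', mul_comm]; exact Nat.mod_mul_right_div_self y ℓ k
  have h' : VV k ℓ v x' = VV k ℓ v y' := by
    rw [VV_congr (Nat.mod_modEq x (k * ℓ)), VV_congr (Nat.mod_modEq y (k * ℓ))]
    exact h
  rcases eq_or_ne (x' / ℓ) (y' / ℓ) with hd | hd
  · rcases eq_or_ne x' y' with he | he
    · constructor
      · rw [← hxm, ← hym, he]
      · rw [← hxd, ← hyd, hd]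
    · exact absurd h' (hc.hself x' y' (Nat.mod_lt _ hN0) (Nat.mod_lt _ hN0) hd he)
  · have hmem := hc.hmeet x' y' (Nat.mod_lt _ hN0) (Nat.mod_lt _ hN0) hd h'
    have hnot := hc.notST x' (by omega) (by omega)
    rcases Finset.mem_union.mp hmem with hm | hm
    · exact absurd hm hnot.1
    · exact absurd hm hnot.2


lemma SEP (x δ : ℕ) (h0 : 0 < δ) (h1 : δ + 1 < ℓ) : VV k ℓ v x ≠ VV k ℓ v (x + δ) := by
  intro h
  have hl0 := hc.hl0
  have hkm := hc.hkm; have hkn := hc.hkn; have hk2 := hc.hk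
  have hdm := Nat.div_add_mod' x ℓ
  have hxl : x % ℓ < ℓ := Nat.mod_lt _ hl0
  set c := x % ℓ with hc'
  set I := x / ℓ with hI
  rcases Nat.lt_or_ge (c + δ) ℓ with hlt | hge
  · have hyrw : x + δ = I * ℓ + (c + δ) := by omega
    have hyd : (x + δ) / ℓ = I := by rw [hyrw]; exact dm_div ℓ _ _ hl0 hlt
    have hym : (x + δ) % ℓ = c + δ := by rw [hyrw]; exact dm_mod ℓ _ _ hlt
    rcases Nat.lt_or_ge c k with hck | hck
    · have hyS : VV k ℓ v (x + δ) ∈ Finset.univ.image s := by rw [← h]; exact hc.memS x hck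
      have hyk : (x + δ) % ℓ < k := (hc.inS_iff (x + δ)).mp hyS
      rw [hym] at hyk
      have hidx := hc.sIdx hck (by omega : (x + δ) % ℓ < k) h
      rw [hyd, hym] at hidx
      have e : I + (c + δ) = (I + c) + δ := by ring
      rw [e] at hidx
      have hdvd : k ∣ δ := by
        have := (Nat.modEq_iff_dvd' (by omega : I + c ≤ I + c + δ)).mp hidx
        simpa using this
      have := Nat.le_of_dvd h0 hdvd
      omega
    · rcases Nat.lt_or_ge c (ℓ / 2) with hcm | hcm
      · have := hc.intUniq (x := x) (by omega) (Or.inl hcm) h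
        omega
      · rcases Nat.lt_or_ge c (ℓ / 2 + k) with hcm2 | hcm2
        · have hyT : VV k ℓ v (x + δ) ∈ Finset.univ.image t := by
            rw [← h]; exact hc.memT x hcm (by omega)
          have hyk := (hc.inT_iff (x + δ)).mp hyT
          rw [hym] at hyk
          have hidx := hc.tIdx hcm (by omega) (by rw [hym]; omega) (by rw [hym]; omega) h
          rw [hyd, hym] at hidx
          have e : I + (c + δ - ℓ / 2) = (I + (c - ℓ / 2)) + δ := by omega
          rw [e] at hidx
          have hdvd : k ∣ δ := by
            have := (Nat.modEq_iff_dvd' (by omega : I + (c - ℓ/2) ≤ I + (c - ℓ/2) + δ)).mp hidx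
            simpa using this
          have := Nat.le_of_dvd h0 hdvd
          omega
        · have := hc.intUniq (x := x) (by omega) (Or.inr hcm2) h
          omega
  · have hlt2 : c + δ - ℓ < ℓ := by omega
    have hyrw : x + δ = (I + 1) * ℓ + (c + δ - ℓ) := by
      have : (I + 1) * ℓ = I * ℓ + ℓ := by ring
      omega
    have hyd : (x + δ) / ℓ = I + 1 := by rw [hyrw]; exact dm_div ℓ _ _ hl0 hlt2
    have hym : (x + δ) % ℓ = c + δ - ℓ := by rw [hyrw]; exact dm_mod ℓ _ _ hlt2
    rcases Nat.lt_or_ge c k with hck | hck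
    · have hyS : VV k ℓ v (x + δ) ∈ Finset.univ.image s := by rw [← h]; exact hc.memS x hck
      have hyk : (x + δ) % ℓ < k := (hc.inS_iff (x + δ)).mp hyS
      rw [hym] at hyk
      have hidx := hc.sIdx hck (by omega : (x + δ) % ℓ < k) h
      rw [hyd, hym] at hidx
      have e : I + c = (I + 1 + (c + δ - ℓ)) + (ℓ - δ - 1) := by omega
      rw [e] at hidx
      have hdvd : k ∣ ℓ - δ - 1 := by
        have := (Nat.modEq_iff_dvd'
          (by omega : I + 1 + (c + δ - ℓ) ≤ I + 1 + (c + δ - ℓ) + (ℓ - δ - 1))).mp hidx.symm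
        simpa using this
      have := Nat.le_of_dvd (by omega) hdvd
      omega
    · rcases Nat.lt_or_ge c (ℓ / 2) with hcm | hcm
      · have := hc.intUniq (x := x) (by omega) (Or.inl hcm) h
        omega
      · rcases Nat.lt_or_ge c (ℓ / 2 + k) with hcm2 | hcm2
        · have hyT : VV k ℓ v (x + δ) ∈ Finset.univ.image t := by
            rw [← h]; exact hc.memT x hcm (by omega)
          have hyk := (hc.inT_iff (x + δ)).mp hyT
          rw [hym] at hyk
          have hidx := hc.tIdx hcm (by omega) (by rw [hym]; omega) (by rw [hym]; omega) h
          rw [hyd, hym] at hidx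
          have e : I + (c - ℓ / 2) = (I + 1 + (c + δ - ℓ - ℓ / 2)) + (ℓ - δ - 1) := by omega
          rw [e] at hidx
          have hdvd : k ∣ ℓ - δ - 1 := by
            have := (Nat.modEq_iff_dvd' (by omega :
              I + 1 + (c + δ - ℓ - ℓ/2) ≤ I + 1 + (c + δ - ℓ - ℓ/2) + (ℓ - δ - 1))).mp hidx.symm
            simpa using this
          have := Nat.le_of_dvd (by omega) hdvd
          omega
        · have := hc.intUniq (x := x) (by omega) (Or.inr hcm2) h
          omega

lemma NOV (p d : ℕ) (h0 : 0 < d) (h1 : d < k) : win k ℓ v p ≠ win k ℓ v (p + d) := by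
  intro h
  have h2k := hc.h2k
  have hp : VV k ℓ v p ∈ win k ℓ v p := mem_win.mpr ⟨0, hc.hk0, by rw [add_zero]⟩
  rw [h] at hp
  obtain ⟨j, hj, hv⟩ := mem_win.mp hp
  have e : p + d + j = p + (d + j) := by ring
  rw [e] at hv
  exact hc.SEP p (d + j) (by omega) (by omega) hv.symm

lemma LSwin (p : ℕ) (h : p % ℓ = 0) : win k ℓ v p = Finset.univ.image s := by
  have hl0 := hc.hl0; have hkm := hc.hkm; have hkn := hc.hkn
  have hdm := Nat.div_add_mod' p ℓ
  have hrw : ∀ j, j < k → p + j = (p / ℓ) * ℓ + j := by intro j hj; omega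
  ext x
  rw [mem_win, Finset.mem_image]
  constructor
  · rintro ⟨j, hj, rfl⟩
    refine Finset.mem_image.mp (hc.memS (p + j) ?_)
    rw [hrw j hj, dm_mod ℓ _ _ (by omega)]
    omega
  · rintro ⟨a, -, rfl⟩
    obtain ⟨j, hj, hidx⟩ := exists_shift hc.hk0 (p / ℓ) a.1 a.2
    refine ⟨j, hj, ?_⟩
    rw [hc.hS (p + j) (by rw [hrw j hj, dm_mod ℓ _ _ (by omega)]; omega)]
    refine congrArg s (Fin.ext ?_)
    rw [hrw j hj, dm_mod ℓ _ _ (by omega), dm_div ℓ _ _ hl0 (by omega)]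
    exact hidx

lemma LTwin (p : ℕ) (h : p % ℓ = ℓ / 2) : win k ℓ v p = Finset.univ.image t := by
  have hl0 := hc.hl0; have hkm := hc.hkm; have hkn := hc.hkn
  have hdm := Nat.div_add_mod' p ℓ
  have hrw : ∀ j, j < k → p + j = (p / ℓ) * ℓ + (ℓ / 2 + j) := by intro j hj; omega
  ext x
  rw [mem_win, Finset.mem_image]
  constructor
  · rintro ⟨j, hj, rfl⟩
    refine Finset.mem_image.mp (hc.memT (p + j) ?_ ?_) <;>
      rw [hrw j hj, dm_mod ℓ _ _ (by omega)] <;> omega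
  · rintro ⟨a, -, rfl⟩
    obtain ⟨j, hj, hidx⟩ := exists_shift hc.hk0 (p / ℓ) a.1 a.2
    refine ⟨j, hj, ?_⟩
    rw [hc.hT (p + j) (by rw [hrw j hj, dm_mod ℓ _ _ (by omega)]; omega)
      (by rw [hrw j hj, dm_mod ℓ _ _ (by omega)]; omega)]
    refine congrArg t (Fin.ext ?_)
    rw [hrw j hj, dm_mod ℓ _ _ (by omega), dm_div ℓ _ _ hl0 (by omega)]
    have e : ℓ / 2 + j - ℓ / 2 = j := by omega
    rw [e]
    exact hidx

lemma PURES (q : ℕ) (hq : win k ℓ v q = Finset.univ.image s) : q % ℓ = 0 := by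
  have hl0 := hc.hl0; have hkm := hc.hkm; have hkn := hc.hkn
  have hall : ∀ j, j < k → (q + j) % ℓ < k := by
    intro j hj
    have : VV k ℓ v (q + j) ∈ Finset.univ.image s := by
      rw [← hq]; exact mem_win.mpr ⟨j, hj, rfl⟩
    exact (hc.inS_iff (q + j)).mp this
  have hb := hall 0 hc.hk0
  rw [add_zero] at hb
  by_contra h0
  have hdm := Nat.div_add_mod' q ℓ
  have hj := hall (k - q % ℓ) (by omega)
  have e : q + (k - q % ℓ) = (q / ℓ) * ℓ + k := by omega
  rw [e, dm_mod ℓ _ _ (by omega)] at hj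
  omega

lemma PURET (q : ℕ) (hq : win k ℓ v q = Finset.univ.image t) : q % ℓ = ℓ / 2 := by
  have hl0 := hc.hl0; have hkm := hc.hkm; have hkn := hc.hkn
  have hall : ∀ j, j < k → ℓ / 2 ≤ (q + j) % ℓ ∧ (q + j) % ℓ < ℓ / 2 + k := by
    intro j hj
    have : VV k ℓ v (q + j) ∈ Finset.univ.image t := by
      rw [← hq]; exact mem_win.mpr ⟨j, hj, rfl⟩
    exact (hc.inT_iff (q + j)).mp this
  have hb := hall 0 hc.hk0
  rw [add_zero] at hb
  by_contra h0
  have hdm := Nat.div_add_mod' q ℓ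
  have hj := hall (ℓ / 2 + k - q % ℓ) (by omega)
  rcases Nat.lt_or_ge (ℓ / 2 + k) ℓ with hl2 | hl2
  · have e : q + (ℓ / 2 + k - q % ℓ) = (q / ℓ) * ℓ + (ℓ / 2 + k) := by omega
    rw [e, dm_mod ℓ _ _ (by omega)] at hj
    omega
  · have e : q + (ℓ / 2 + k - q % ℓ) = (q / ℓ + 1) * ℓ + 0 := by
      have : (q / ℓ + 1) * ℓ = q / ℓ * ℓ + ℓ := by ring
      omega
    rw [e, dm_mod ℓ _ _ (by omega)] at hj
    omega

lemma HINT {p q : ℕ} (hp : p < k * ℓ) (hq : q < k * ℓ) {j₀ : ℕ} (hj₀ : j₀ < k)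
    (hi1 : k ≤ (p + j₀) % ℓ) (hi2 : (p + j₀) % ℓ < ℓ / 2 ∨ ℓ / 2 + k ≤ (p + j₀) % ℓ)
    (h : win k ℓ v p = win k ℓ v q) : p = q := by
  have hN0 : 0 < k * ℓ := Nat.mul_pos hc.hk0 hc.hl0
  have hmem : VV k ℓ v (p + j₀) ∈ win k ℓ v q := by
    rw [← h]; exact mem_win.mpr ⟨j₀, hj₀, rfl⟩
  obtain ⟨j₁, hj₁, hv⟩ := mem_win.mp hmem
  obtain ⟨hoff, hseg⟩ := hc.intUniq hi1 hi2 hv.symm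
  have hcong : p + j₀ ≡ q + j₁ [MOD k * ℓ] := by
    calc p + j₀ ≡ ((p + j₀) / ℓ % k) * ℓ + (p + j₀) % ℓ [MOD k * ℓ] := modNEq k ℓ _
    _ = ((q + j₁) / ℓ % k) * ℓ + (q + j₁) % ℓ := by rw [hoff, hseg]
    _ ≡ q + j₁ [MOD k * ℓ] := (modNEq k ℓ _).symm
  rcases Nat.lt_trichotomy j₀ j₁ with hlt | heq | hgt
  · exfalso
    have e : q + j₁ = (q + (j₁ - j₀)) + j₀ := by omega
    rw [e] at hcong
    have hcong2 : p ≡ q + (j₁ - j₀) [MOD k * ℓ] := Nat.ModEq.add_right_cancel' j₀ hcong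
    exact hc.NOV q (j₁ - j₀) (by omega) (by omega) (h.symm.trans (win_congr hcong2))
  · rw [heq] at hcong
    have hcong2 : p ≡ q [MOD k * ℓ] := Nat.ModEq.add_right_cancel' j₁ hcong
    rw [Nat.ModEq, Nat.mod_eq_of_lt hp, Nat.mod_eq_of_lt hq] at hcong2
    exact hcong2
  · exfalso
    have e : p + j₀ = (p + (j₀ - j₁)) + j₁ := by omega
    rw [e] at hcong
    have hcong2 : p + (j₀ - j₁) ≡ q [MOD k * ℓ] := Nat.ModEq.add_right_cancel' j₁ hcong
    exact hc.NOV p (j₀ - j₁) (by omega) (by omega) (h.trans (win_congr hcong2.symm))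


lemma winSplit_c (p : ℕ) (hkm' : k = ℓ / 2) (h1 : 0 < p % ℓ) (h2 : p % ℓ < k) :
    win k ℓ v p ∩ Finset.univ.image s = arc s hc.hk0 (p / ℓ + p % ℓ) (k - p % ℓ) ∧
    win k ℓ v p ∩ Finset.univ.image t = arc t hc.hk0 (p / ℓ) (p % ℓ) := by
  have hl0 := hc.hl0; have hkm := hc.hkm; have hkn := hc.hkn; have h2k := hc.h2k
  have hdm := Nat.div_add_mod' p ℓ
  have haj : ∀ j, j < k → (p + j) % ℓ = p % ℓ + j ∧ (p + j) / ℓ = p / ℓ := by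
    intro j hj
    have e : p + j = (p / ℓ) * ℓ + (p % ℓ + j) := by omega
    have hlt : p % ℓ + j < ℓ := by omega
    exact ⟨by rw [e]; exact dm_mod ℓ _ _ hlt, by rw [e]; exact dm_div ℓ _ _ hl0 hlt⟩
  constructor
  · ext x
    rw [Finset.mem_inter, mem_win, mem_arc]
    constructor
    · rintro ⟨⟨j, hj, rfl⟩, hxs⟩
      obtain ⟨hmod, hdiv⟩ := haj j hj
      have hoff : (p + j) % ℓ < k := (hc.inS_iff (p + j)).mp hxs
      rw [hmod] at hoff
      refine ⟨j, by omega, ?_⟩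
      rw [hc.hS (p + j) (by rw [hmod]; omega)]
      exact congrArg s (Fin.ext (by rw [hmod, hdiv, add_assoc]))
    · rintro ⟨i, hi, rfl⟩
      obtain ⟨hmod, hdiv⟩ := haj i (by omega)
      constructor
      · refine ⟨i, by omega, ?_⟩
        rw [hc.hS (p + i) (by rw [hmod]; omega)]
        exact congrArg s (Fin.ext (by rw [hmod, hdiv, add_assoc]))
      · exact Finset.mem_image_of_mem s (Finset.mem_univ _)
  · ext x
    rw [Finset.mem_inter, mem_win, mem_arc]
    constructor
    · rintro ⟨⟨j, hj, rfl⟩, hxt⟩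
      obtain ⟨hmod, hdiv⟩ := haj j hj
      have hoff := (hc.inT_iff (p + j)).mp hxt
      rw [hmod] at hoff
      refine ⟨p % ℓ + j - k, by omega, ?_⟩
      rw [hc.hT (p + j) (by rw [hmod]; omega) (by rw [hmod]; omega)]
      refine congrArg t (Fin.ext ?_)
      simp only [Fin.val_mk]
      rw [hmod, hdiv]
      all_goals
        first
        | rfl
        | (congr 1; omega)
    · rintro ⟨i, hi, rfl⟩
      have hjk : k - p % ℓ + i < k := by omega
      obtain ⟨hmod, hdiv⟩ := haj (k - p % ℓ + i) hjk
      constructor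
      · refine ⟨k - p % ℓ + i, hjk, ?_⟩
        rw [hc.hT (p + (k - p % ℓ + i)) (by rw [hmod]; omega) (by rw [hmod]; omega)]
        refine congrArg t (Fin.ext ?_)
        simp only [Fin.val_mk]
        rw [hmod, hdiv]
        all_goals
          first
          | rfl
          | (congr 1; omega)
      · exact Finset.mem_image_of_mem t (Finset.mem_univ _)

lemma winSplit_d (p : ℕ) (hkn' : ℓ / 2 + k = ℓ) (h1 : ℓ / 2 < p % ℓ) :
    win k ℓ v p ∩ Finset.univ.image s = arc s hc.hk0 (p / ℓ + 1) (p % ℓ - ℓ / 2) ∧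
    win k ℓ v p ∩ Finset.univ.image t = arc t hc.hk0 (p / ℓ + (p % ℓ - ℓ / 2)) (ℓ - p % ℓ) := by
  have hl0 := hc.hl0; have hkm := hc.hkm; have hkn := hc.hkn; have h2k := hc.h2k
  have hdm := Nat.div_add_mod' p ℓ
  have hpl : p % ℓ < ℓ := Nat.mod_lt _ hl0
  have haj : ∀ j, p % ℓ + j < ℓ → (p + j) % ℓ = p % ℓ + j ∧ (p + j) / ℓ = p / ℓ := by
    intro j hlt
    have e : p + j = (p / ℓ) * ℓ + (p % ℓ + j) := by omega
    exact ⟨by rw [e]; exact dm_mod ℓ _ _ hlt, by rw [e]; exact dm_div ℓ _ _ hl0 hlt⟩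
  have hajw : ∀ j, j < k → ℓ ≤ p % ℓ + j →
      (p + j) % ℓ = p % ℓ + j - ℓ ∧ (p + j) / ℓ = p / ℓ + 1 := by
    intro j hj hge
    have hx : (p / ℓ + 1) * ℓ = p / ℓ * ℓ + ℓ := by ring
    have e : p + j = (p / ℓ + 1) * ℓ + (p % ℓ + j - ℓ) := by omega
    have hlt : p % ℓ + j - ℓ < ℓ := by omega
    exact ⟨by rw [e]; exact dm_mod ℓ _ _ hlt, by rw [e]; exact dm_div ℓ _ _ hl0 hlt⟩
  constructor
  · ext x
    rw [Finset.mem_inter, mem_win, mem_arc]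
    constructor
    · rintro ⟨⟨j, hj, rfl⟩, hxs⟩
      have hoff : (p + j) % ℓ < k := (hc.inS_iff (p + j)).mp hxs
      rcases Nat.lt_or_ge (p % ℓ + j) ℓ with hlt | hge
      · obtain ⟨hmod, -⟩ := haj j hlt
        rw [hmod] at hoff
        omega
      · obtain ⟨hmod, hdiv⟩ := hajw j hj hge
        refine ⟨p % ℓ + j - ℓ, by omega, ?_⟩
        rw [hc.hS (p + j) (by rw [hmod]; omega)]
        refine congrArg s (Fin.ext ?_)
        simp only [Fin.val_mk]
        rw [hmod, hdiv]
        all_goals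
          first
          | rfl
          | (congr 1; omega)
    · rintro ⟨i, hi, rfl⟩
      have hjk : ℓ - p % ℓ + i < k := by omega
      obtain ⟨hmod, hdiv⟩ := hajw (ℓ - p % ℓ + i) hjk (by omega)
      constructor
      · refine ⟨ℓ - p % ℓ + i, hjk, ?_⟩
        rw [hc.hS (p + (ℓ - p % ℓ + i)) (by rw [hmod]; omega)]
        refine congrArg s (Fin.ext ?_)
        simp only [Fin.val_mk]
        rw [hmod, hdiv]
        all_goals
          first
          | rfl
          | (congr 1; omega)
      · exact Finset.mem_image_of_mem s (Finset.mem_univ _)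
  · ext x
    rw [Finset.mem_inter, mem_win, mem_arc]
    constructor
    · rintro ⟨⟨j, hj, rfl⟩, hxt⟩
      have hoff := (hc.inT_iff (p + j)).mp hxt
      rcases Nat.lt_or_ge (p % ℓ + j) ℓ with hlt | hge
      · obtain ⟨hmod, hdiv⟩ := haj j hlt
        refine ⟨j, by omega, ?_⟩
        rw [hc.hT (p + j) (by rw [hmod]; omega) (by rw [hmod]; omega)]
        refine congrArg t (Fin.ext ?_)
        simp only [Fin.val_mk]
        rw [hmod, hdiv]
        all_goals
          first
          | rfl
          | (congr 1; omega)
      · obtain ⟨hmod, -⟩ := hajw j hj hge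
        rw [hmod] at hoff
        omega
    · rintro ⟨i, hi, rfl⟩
      have hlt : p % ℓ + i < ℓ := by omega
      obtain ⟨hmod, hdiv⟩ := haj i hlt
      constructor
      · refine ⟨i, by omega, ?_⟩
        rw [hc.hT (p + i) (by rw [hmod]; omega) (by rw [hmod]; omega)]
        refine congrArg t (Fin.ext ?_)
        simp only [Fin.val_mk]
        rw [hmod, hdiv]
        all_goals
          first
          | rfl
          | (congr 1; omega)
      · exact Finset.mem_image_of_mem t (Finset.mem_univ _)

lemma CLS (a : ℕ) (ha : a < ℓ) (h0 : a ≠ 0) (hm : a ≠ ℓ / 2) :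
    (∃ j, j < k ∧ k ≤ (a + j) % ℓ ∧ ((a + j) % ℓ < ℓ / 2 ∨ ℓ / 2 + k ≤ (a + j) % ℓ)) ∨
    (k = ℓ / 2 ∧ a < k) ∨ (ℓ / 2 + k = ℓ ∧ ℓ / 2 < a) := by
  have hkm := hc.hkm; have hkn := hc.hkn; have hk2 := hc.hk; have hl4 := hc.hl
  rcases Nat.lt_or_ge a k with h1 | h1
  · rcases Nat.lt_or_ge k (ℓ / 2) with h2 | h2
    · left
      refine ⟨k - a, by omega, ?_⟩
      have e : a + (k - a) = k := by omega
      rw [e, Nat.mod_eq_of_lt (by omega)]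
      omega
    · right; left; exact ⟨by omega, h1⟩
  · rcases Nat.lt_or_ge a (ℓ / 2) with h2 | h2
    · left; exact ⟨0, hc.hk0, by rw [add_zero, Nat.mod_eq_of_lt ha]; omega⟩
    · rcases Nat.lt_or_ge a (ℓ / 2 + k) with h3 | h3
      · rcases Nat.lt_or_ge (ℓ / 2 + k) ℓ with h4 | h4
        · left
          refine ⟨ℓ / 2 + k - a, by omega, ?_⟩
          have e : a + (ℓ / 2 + k - a) = ℓ / 2 + k := by omega
          rw [e, Nat.mod_eq_of_lt h4]
          omega
        · right; right; exact ⟨by omega, by omega⟩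
      · left; exact ⟨0, hc.hk0, by rw [add_zero, Nat.mod_eq_of_lt ha]; omega⟩

lemma mixed_cd {p q : ℕ} (hpc : k = ℓ / 2) (hp1 : 0 < p % ℓ) (hp2 : p % ℓ < k)
    (hq1 : ℓ / 2 < q % ℓ) (hqd : ℓ / 2 + k = ℓ)
    (h : win k ℓ v p = win k ℓ v q) : False := by
  have hl0 := hc.hl0; have hk2 := hc.hk
  have hql : q % ℓ < ℓ := Nat.mod_lt _ hl0
  obtain ⟨hS1, hT1⟩ := hc.winSplit_c p hpc hp1 hp2
  obtain ⟨hS2, hT2⟩ := hc.winSplit_d q hqd hq1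
  have hSeq : arc s hc.hk0 (p / ℓ + p % ℓ) (k - p % ℓ) =
      arc s hc.hk0 (q / ℓ + 1) (q % ℓ - ℓ / 2) := by rw [← hS1, ← hS2, h]
  have hTeq : arc t hc.hk0 (p / ℓ) (p % ℓ) =
      arc t hc.hk0 (q / ℓ + (q % ℓ - ℓ / 2)) (ℓ - q % ℓ) := by rw [← hT1, ← hT2, h]
  obtain ⟨hL1, hU1⟩ := arc_inj hc.hs hc.hk0 (by omega) (by omega) (by omega) (by omega) hSeq
  obtain ⟨hL2, hU2⟩ := arc_inj hc.ht hc.hk0 (by omega) (by omega) (by omega) (by omega) hTeq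
  have e1 : Nat.ModEq k (p / ℓ + p % ℓ) (q / ℓ + 1) := hU1
  have e2 : Nat.ModEq k (p / ℓ) (q / ℓ + (q % ℓ - ℓ / 2)) := hU2
  have e3 := e2.add_right (p % ℓ)
  have e5 : q / ℓ + (q % ℓ - ℓ / 2) + p % ℓ = q / ℓ + k := by omega
  rw [e5] at e3
  have e6 : q / ℓ + 1 ≡ q / ℓ + k [MOD k] := e1.symm.trans e3
  have e7 : (1 : ℕ) ≡ k [MOD k] := Nat.ModEq.add_left_cancel' (q / ℓ) e6
  rw [Nat.ModEq, Nat.mod_self, Nat.mod_eq_of_lt (by omega)] at e7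
  omega

lemma FULLINJ {p q : ℕ} (hp : p < k * ℓ) (hq : q < k * ℓ) (h : win k ℓ v p = win k ℓ v q) :
    p = q ∨ (p % ℓ = 0 ∧ q % ℓ = 0) ∨ (p % ℓ = ℓ / 2 ∧ q % ℓ = ℓ / 2) := by
  have hl0 := hc.hl0
  have hpd : p / ℓ < k := (Nat.div_lt_iff_lt_mul hl0).mpr hp
  have hqd : q / ℓ < k := (Nat.div_lt_iff_lt_mul hl0).mpr hq
  have hdp := Nat.div_add_mod' p ℓ
  have hdq := Nat.div_add_mod' q ℓ
  rcases eq_or_ne (p % ℓ) 0 with hp0 | hp0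
  · exact Or.inr (Or.inl ⟨hp0, hc.PURES q (h.symm.trans (hc.LSwin p hp0))⟩)
  rcases eq_or_ne (p % ℓ) (ℓ / 2) with hpm | hpm
  · exact Or.inr (Or.inr ⟨hpm, hc.PURET q (h.symm.trans (hc.LTwin p hpm))⟩)
  rcases eq_or_ne (q % ℓ) 0 with hq0 | hq0
  · exact absurd (hc.PURES p (h.trans (hc.LSwin q hq0))) hp0
  rcases eq_or_ne (q % ℓ) (ℓ / 2) with hqm | hqm
  · exact absurd (hc.PURET p (h.trans (hc.LTwin q hqm))) hpm
  left
  rcases hc.CLS (p % ℓ) (Nat.mod_lt _ hl0) hp0 hpm with ⟨j₀, hj₀, hi1, hi2⟩ | hcp | hcp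
  · rw [Nat.mod_add_mod] at hi1 hi2
    exact hc.HINT hp hq hj₀ hi1 hi2 h
  · rcases hc.CLS (q % ℓ) (Nat.mod_lt _ hl0) hq0 hqm with ⟨j₀, hj₀, hi1, hi2⟩ | hcq | hcq
    · rw [Nat.mod_add_mod] at hi1 hi2
      exact (hc.HINT hq hp hj₀ hi1 hi2 h.symm).symm
    · obtain ⟨hS1, -⟩ := hc.winSplit_c p hcp.1 (by omega) hcp.2
      obtain ⟨hS2, -⟩ := hc.winSplit_c q hcq.1 (by omega) hcq.2
      have hSeq : arc s hc.hk0 (p / ℓ + p % ℓ) (k - p % ℓ) =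
          arc s hc.hk0 (q / ℓ + q % ℓ) (k - q % ℓ) := by rw [← hS1, ← hS2, h]
      obtain ⟨hL, hU⟩ := arc_inj hc.hs hc.hk0 (by omega) (by omega) (by omega) (by omega) hSeq
      have ha : p % ℓ = q % ℓ := by omega
      rw [← ha] at hU
      have hdd : p / ℓ ≡ q / ℓ [MOD k] := Nat.ModEq.add_right_cancel' (p % ℓ) hU
      rw [Nat.ModEq, Nat.mod_eq_of_lt hpd, Nat.mod_eq_of_lt hqd] at hdd
      rw [hdd, ha] at hdp
      omega
    · exact (hc.mixed_cd hcp.1 (by omega) hcp.2 hcq.2 hcq.1 h).elim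
  · rcases hc.CLS (q % ℓ) (Nat.mod_lt _ hl0) hq0 hqm with ⟨j₀, hj₀, hi1, hi2⟩ | hcq | hcq
    · rw [Nat.mod_add_mod] at hi1 hi2
      exact (hc.HINT hq hp hj₀ hi1 hi2 h.symm).symm
    · exact (hc.mixed_cd hcq.1 (by omega) hcq.2 hcp.2 hcp.1 h.symm).elim
    · obtain ⟨hS1, -⟩ := hc.winSplit_d p hcp.1 hcp.2
      obtain ⟨hS2, -⟩ := hc.winSplit_d q hcq.1 hcq.2
      have hpl : p % ℓ < ℓ := Nat.mod_lt _ hl0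
      have hql : q % ℓ < ℓ := Nat.mod_lt _ hl0
      have hSeq : arc s hc.hk0 (p / ℓ + 1) (p % ℓ - ℓ / 2) =
          arc s hc.hk0 (q / ℓ + 1) (q % ℓ - ℓ / 2) := by rw [← hS1, ← hS2, h]
      obtain ⟨hL, hU⟩ := arc_inj hc.hs hc.hk0 (by omega) (by omega) (by omega) (by omega) hSeq
      have hdd : p / ℓ ≡ q / ℓ [MOD k] := Nat.ModEq.add_right_cancel' 1 hU
      rw [Nat.ModEq, Nat.mod_eq_of_lt hpd, Nat.mod_eq_of_lt hqd] at hdd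
      have ha : p % ℓ = q % ℓ := by omega
      rw [hdd, ha] at hdp
      omega


lemma SneT : Finset.univ.image s ≠ Finset.univ.image t := by
  intro h
  have h0 : s ⟨0, hc.hk0⟩ ∈ Finset.univ.image t := by
    rw [← h]; exact Finset.mem_image_of_mem s (Finset.mem_univ _)
  obtain ⟨b, -, hb⟩ := Finset.mem_image.mp h0
  exact hc.sne _ b hb.symm

omit hc in
lemma mem_SC_iff {i : ℕ} {e : Finset V} :
    e ∈ SC k ℓ v i ↔ (∃ α, α < ℓ / 2 ∧ win k ℓ v (i * ℓ + α) = e) ∨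
      (∃ α, α < ℓ - ℓ / 2 - 1 ∧ win k ℓ v ((i + (k - 1)) * ℓ + ℓ / 2 + 1 + α) = e) := by
  simp [SC, Finset.mem_union, Finset.mem_image, Finset.mem_range]

omit hc in
lemma mem_RC_iff {i : ℕ} {e : Finset V} :
    e ∈ RC k ℓ v i ↔ (∃ α, α < ℓ - ℓ / 2 ∧ win k ℓ v (i * ℓ + ℓ / 2 + α) = e) ∨
      (∃ α, α < ℓ / 2 - 1 ∧ win k ℓ v (i * ℓ + 1 + α) = e) := by
  simp [RC, Finset.mem_union, Finset.mem_image, Finset.mem_range]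

omit hc in
lemma winET (x : ℕ) (hN : 0 < k * ℓ) : win k ℓ v x ∈ ET k ℓ v := by
  refine Finset.mem_image.mpr ⟨x % (k * ℓ), Finset.mem_range.mpr (Nat.mod_lt _ hN), ?_⟩
  exact win_congr (Nat.mod_modEq x (k * ℓ))

lemma SC_sub_ET {i : ℕ} {e : Finset V} (h : e ∈ SC k ℓ v i) : e ∈ ET k ℓ v := by
  have hN : 0 < k * ℓ := Nat.mul_pos hc.hk0 hc.hl0
  rcases mem_SC_iff.mp h with ⟨α, -, hw⟩ | ⟨α, -, hw⟩ <;> exact hw ▸ winET _ hN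

lemma RC_sub_ET {i : ℕ} {e : Finset V} (h : e ∈ RC k ℓ v i) : e ∈ ET k ℓ v := by
  have hN : 0 < k * ℓ := Nat.mul_pos hc.hk0 hc.hl0
  rcases mem_RC_iff.mp h with ⟨α, -, hw⟩ | ⟨α, -, hw⟩ <;> exact hw ▸ winET _ hN

lemma SC_char {p₀ : ℕ} (hp₀ : p₀ < k * ℓ) (h0 : p₀ % ℓ ≠ 0) (hm : p₀ % ℓ ≠ ℓ / 2)
    {i : ℕ} (hi : i < k) :
    win k ℓ v p₀ ∈ SC k ℓ v i ↔
      ((i = p₀ / ℓ ∧ p₀ % ℓ < ℓ / 2) ∨ ((i + (k - 1)) % k = p₀ / ℓ ∧ ℓ / 2 < p₀ % ℓ)) := by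
  have hl0 := hc.hl0; have hkm := hc.hkm; have hkn := hc.hkn; have hk2 := hc.hk
  have hdp := Nat.div_add_mod' p₀ ℓ
  have hpl : p₀ % ℓ < ℓ := Nat.mod_lt _ hl0
  have hpd : p₀ / ℓ < k := (Nat.div_lt_iff_lt_mul hl0).mpr hp₀
  rw [mem_SC_iff]
  constructor
  · rintro (⟨α, hα, hwin⟩ | ⟨α, hα, hwin⟩)
    · left
      have hx : i * ℓ + α < k * ℓ := lt_N hi (by omega)
      rcases hc.FULLINJ hx hp₀ hwin with heq | ⟨-, h2⟩ | ⟨-, h2⟩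
      · have hdd : (i * ℓ + α) / ℓ = i := dm_div ℓ _ _ hl0 (by omega)
        have hmm : (i * ℓ + α) % ℓ = α := dm_mod ℓ _ _ (by omega)
        rw [heq] at hdd hmm
        exact ⟨hdd.symm, by omega⟩
      · exact absurd h2 h0
      · exact absurd h2 hm
    · right
      have eassoc : (i + (k - 1)) * ℓ + ℓ / 2 + 1 + α = (i + (k - 1)) * ℓ + (ℓ / 2 + 1 + α) := by
        ring
      rw [eassoc] at hwin
      have hcong : (i + (k - 1)) * ℓ + (ℓ / 2 + 1 + α) ≡
          ((i + (k - 1)) % k) * ℓ + (ℓ / 2 + 1 + α) [MOD k * ℓ] :=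
        (((Nat.mod_modEq (i + (k - 1)) k).symm).mul_right' ℓ).add_right _
      have hwin2 : win k ℓ v (((i + (k - 1)) % k) * ℓ + (ℓ / 2 + 1 + α)) = win k ℓ v p₀ :=
        (win_congr hcong).symm.trans hwin
      have hx : ((i + (k - 1)) % k) * ℓ + (ℓ / 2 + 1 + α) < k * ℓ :=
        lt_N (Nat.mod_lt _ hc.hk0) (by omega)
      rcases hc.FULLINJ hx hp₀ hwin2 with heq | ⟨h2, -⟩ | ⟨h2, -⟩
      · have hdd : (((i + (k - 1)) % k) * ℓ + (ℓ / 2 + 1 + α)) / ℓ = (i + (k - 1)) % k :=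
          dm_div ℓ _ _ hl0 (by omega)
        have hmm : (((i + (k - 1)) % k) * ℓ + (ℓ / 2 + 1 + α)) % ℓ = ℓ / 2 + 1 + α :=
          dm_mod ℓ _ _ (by omega)
        rw [heq] at hdd hmm
        exact ⟨hdd.symm, by omega⟩
      · rw [dm_mod ℓ _ _ (by omega)] at h2
        omega
      · rw [dm_mod ℓ _ _ (by omega)] at h2
        omega
  · rintro (⟨rfl, hi2⟩ | ⟨hi1, hi2⟩)
    · exact Or.inl ⟨p₀ % ℓ, hi2, congrArg (win k ℓ v) hdp⟩
    · right
      refine ⟨p₀ % ℓ - ℓ / 2 - 1, by omega, ?_⟩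
      have eassoc : (i + (k - 1)) * ℓ + ℓ / 2 + 1 + (p₀ % ℓ - ℓ / 2 - 1) =
          (i + (k - 1)) * ℓ + p₀ % ℓ := by omega
      rw [eassoc]
      have h1 : (i + (k - 1)) ≡ p₀ / ℓ [MOD k] := by
        rw [Nat.ModEq, hi1, Nat.mod_eq_of_lt hpd]
      have hcong : (i + (k - 1)) * ℓ + p₀ % ℓ ≡ p₀ / ℓ * ℓ + p₀ % ℓ [MOD k * ℓ] :=
        (h1.mul_right' ℓ).add_right _
      exact (win_congr hcong).trans (congrArg (win k ℓ v) hdp)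

lemma RC_char {p₀ : ℕ} (hp₀ : p₀ < k * ℓ) (h0 : p₀ % ℓ ≠ 0) (hm : p₀ % ℓ ≠ ℓ / 2)
    {i : ℕ} (hi : i < k) :
    win k ℓ v p₀ ∈ RC k ℓ v i ↔ i = p₀ / ℓ := by
  have hl0 := hc.hl0; have hkm := hc.hkm; have hkn := hc.hkn; have hk2 := hc.hk
  have hdp := Nat.div_add_mod' p₀ ℓ
  have hpl : p₀ % ℓ < ℓ := Nat.mod_lt _ hl0
  have hpd : p₀ / ℓ < k := (Nat.div_lt_iff_lt_mul hl0).mpr hp₀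
  rw [mem_RC_iff]
  constructor
  · rintro (⟨α, hα, hwin⟩ | ⟨α, hα, hwin⟩)
    · have eassoc : i * ℓ + ℓ / 2 + α = i * ℓ + (ℓ / 2 + α) := by ring
      rw [eassoc] at hwin
      have hx : i * ℓ + (ℓ / 2 + α) < k * ℓ := lt_N hi (by omega)
      rcases hc.FULLINJ hx hp₀ hwin with heq | ⟨-, h2⟩ | ⟨-, h2⟩
      · have hdd : (i * ℓ + (ℓ / 2 + α)) / ℓ = i := dm_div ℓ _ _ hl0 (by omega)
        rw [heq] at hdd
        exact hdd.symm
      · exact absurd h2 h0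
      · exact absurd h2 hm
    · have eassoc : i * ℓ + 1 + α = i * ℓ + (1 + α) := by ring
      rw [eassoc] at hwin
      have hx : i * ℓ + (1 + α) < k * ℓ := lt_N hi (by omega)
      rcases hc.FULLINJ hx hp₀ hwin with heq | ⟨-, h2⟩ | ⟨-, h2⟩
      · have hdd : (i * ℓ + (1 + α)) / ℓ = i := dm_div ℓ _ _ hl0 (by omega)
        rw [heq] at hdd
        exact hdd.symm
      · exact absurd h2 h0
      · exact absurd h2 hm
  · rintro rfl
    rcases Nat.lt_or_ge (p₀ % ℓ) (ℓ / 2) with hlt | hge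
    · right
      refine ⟨p₀ % ℓ - 1, by omega, ?_⟩
      have eassoc : p₀ / ℓ * ℓ + 1 + (p₀ % ℓ - 1) = p₀ / ℓ * ℓ + p₀ % ℓ := by omega
      rw [eassoc]
      exact congrArg (win k ℓ v) hdp
    · left
      refine ⟨p₀ % ℓ - ℓ / 2, by omega, ?_⟩
      have eassoc : p₀ / ℓ * ℓ + ℓ / 2 + (p₀ % ℓ - ℓ / 2) = p₀ / ℓ * ℓ + p₀ % ℓ := by omega
      rw [eassoc]
      exact congrArg (win k ℓ v) hdp

lemma count_SC {p₀ : ℕ} (hp₀ : p₀ < k * ℓ) (h0 : p₀ % ℓ ≠ 0) (hm : p₀ % ℓ ≠ ℓ / 2) :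
    ((Finset.range k).filter fun i => win k ℓ v p₀ ∈ SC k ℓ v i).card = 1 := by
  have hl0 := hc.hl0; have hk2 := hc.hk
  have hpl : p₀ % ℓ < ℓ := Nat.mod_lt _ hl0
  have hpd : p₀ / ℓ < k := (Nat.div_lt_iff_lt_mul hl0).mpr hp₀
  rcases Nat.lt_or_ge (p₀ % ℓ) (ℓ / 2) with hlt | hge
  · have he : ((Finset.range k).filter fun i => win k ℓ v p₀ ∈ SC k ℓ v i) = {p₀ / ℓ} := by
      ext i
      simp only [Finset.mem_filter, Finset.mem_range, Finset.mem_singleton]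
      constructor
      · rintro ⟨hik, hmem⟩
        rcases (hc.SC_char hp₀ h0 hm hik).mp hmem with ⟨h1, -⟩ | ⟨-, h2⟩
        · exact h1
        · omega
      · rintro rfl
        exact ⟨hpd, (hc.SC_char hp₀ h0 hm hpd).mpr (Or.inl ⟨rfl, hlt⟩)⟩
    rw [he, Finset.card_singleton]
  · have hmlt : ℓ / 2 < p₀ % ℓ := by omega
    set i₀ := (p₀ / ℓ + 1) % k with hi₀
    have hi₀k : i₀ < k := Nat.mod_lt _ hc.hk0
    have h2 : (i₀ + (k - 1)) % k = p₀ / ℓ := by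
      rw [hi₀, Nat.mod_add_mod]
      have e : p₀ / ℓ + 1 + (k - 1) = p₀ / ℓ + k := by omega
      rw [e, Nat.add_mod_right, Nat.mod_eq_of_lt hpd]
    have he : ((Finset.range k).filter fun i => win k ℓ v p₀ ∈ SC k ℓ v i) = {i₀} := by
      ext i
      simp only [Finset.mem_filter, Finset.mem_range, Finset.mem_singleton]
      constructor
      · rintro ⟨hik, hmem⟩
        rcases (hc.SC_char hp₀ h0 hm hik).mp hmem with ⟨-, h1⟩ | ⟨h1, -⟩
        · omega
        · have h3 : i ≡ i₀ [MOD k] :=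
            Nat.ModEq.add_right_cancel' (k - 1) (show Nat.ModEq k (i + (k - 1)) (i₀ + (k - 1))
              from h1.trans h2.symm)
          rw [Nat.ModEq, Nat.mod_eq_of_lt hik, Nat.mod_eq_of_lt hi₀k] at h3
          exact h3
      · rintro rfl
        exact ⟨hi₀k, (hc.SC_char hp₀ h0 hm hi₀k).mpr (Or.inr ⟨h2, hmlt⟩)⟩
    rw [he, Finset.card_singleton]

lemma count_RC {p₀ : ℕ} (hp₀ : p₀ < k * ℓ) (h0 : p₀ % ℓ ≠ 0) (hm : p₀ % ℓ ≠ ℓ / 2) :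
    ((Finset.range k).filter fun i => win k ℓ v p₀ ∈ RC k ℓ v i).card = 1 := by
  have hl0 := hc.hl0
  have hpd : p₀ / ℓ < k := (Nat.div_lt_iff_lt_mul hl0).mpr hp₀
  have he : ((Finset.range k).filter fun i => win k ℓ v p₀ ∈ RC k ℓ v i) = {p₀ / ℓ} := by
    ext i
    simp only [Finset.mem_filter, Finset.mem_range, Finset.mem_singleton]
    constructor
    · rintro ⟨hik, hmem⟩
      exact (hc.RC_char hp₀ h0 hm hik).mp hmem
    · rintro rfl
      exact ⟨hpd, (hc.RC_char hp₀ h0 hm hpd).mpr rfl⟩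
  rw [he, Finset.card_singleton]

lemma count_S_SC :
    ((Finset.range k).filter fun i => Finset.univ.image s ∈ SC k ℓ v i).card = k := by
  have hkm := hc.hkm; have hk2 := hc.hk
  rw [Finset.filter_true_of_mem, Finset.card_range]
  intro i _
  refine mem_SC_iff.mpr (Or.inl ⟨0, by omega, ?_⟩)
  rw [add_zero]
  exact hc.LSwin (i * ℓ) (Nat.mul_mod_left i ℓ)

lemma count_S_RC :
    ((Finset.range k).filter fun i => Finset.univ.image s ∈ RC k ℓ v i).card = 0 := by
  have hl0 := hc.hl0; have hkm := hc.hkm; have hkn := hc.hkn; have hk2 := hc.hk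
  rw [Finset.card_eq_zero, Finset.filter_eq_empty_iff]
  intro i _ hmem
  rcases mem_RC_iff.mp hmem with ⟨α, hα, hw⟩ | ⟨α, hα, hw⟩
  · have := hc.PURES _ hw
    have eassoc : i * ℓ + ℓ / 2 + α = i * ℓ + (ℓ / 2 + α) := by ring
    rw [eassoc, dm_mod ℓ _ _ (by omega)] at this
    omega
  · have := hc.PURES _ hw
    have eassoc : i * ℓ + 1 + α = i * ℓ + (1 + α) := by ring
    rw [eassoc, dm_mod ℓ _ _ (by omega)] at this
    omega

lemma count_T_RC :
    ((Finset.range k).filter fun i => Finset.univ.image t ∈ RC k ℓ v i).card = k := by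
  have hl0 := hc.hl0; have hkm := hc.hkm; have hkn := hc.hkn; have hk2 := hc.hk
  rw [Finset.filter_true_of_mem, Finset.card_range]
  intro i _
  refine mem_RC_iff.mpr (Or.inl ⟨0, by omega, ?_⟩)
  rw [add_zero]
  exact hc.LTwin (i * ℓ + ℓ / 2) (dm_mod ℓ _ _ (by omega))

lemma count_T_SC :
    ((Finset.range k).filter fun i => Finset.univ.image t ∈ SC k ℓ v i).card = 0 := by
  have hl0 := hc.hl0; have hkm := hc.hkm; have hkn := hc.hkn; have hk2 := hc.hk
  rw [Finset.card_eq_zero, Finset.filter_eq_empty_iff]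
  intro i _ hmem
  rcases mem_SC_iff.mp hmem with ⟨α, hα, hw⟩ | ⟨α, hα, hw⟩
  · have := hc.PURET _ hw
    rw [dm_mod ℓ _ _ (by omega)] at this
    omega
  · have := hc.PURET _ hw
    have eassoc : (i + (k - 1)) * ℓ + ℓ / 2 + 1 + α = (i + (k - 1)) * ℓ + (ℓ / 2 + 1 + α) := by
      ring
    rw [eassoc, dm_mod ℓ _ _ (by omega)] at this
    omega

end Ctx

lemma mkCtx (hk : 2 ≤ k) (hℓ : 4 ≤ ℓ)
    (hs : Function.Injective s) (ht : Function.Injective t)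
    (hst : Disjoint (Finset.univ.image s) (Finset.univ.image t))
    (hvis_s : ∀ i < k, ∀ j : Fin k,
      v ((i * ℓ + j.1 : ℕ) : ZMod (k * ℓ)) = s ⟨(i + j.1) % k, Nat.mod_lt _ (Nat.lt_of_lt_of_le Nat.zero_lt_two hk)⟩)
    (hvis_t : ∀ i < k, ∀ j : Fin k,
      v ((i * ℓ + ℓ / 2 + j.1 : ℕ) : ZMod (k * ℓ)) = t ⟨(i + j.1) % k, Nat.mod_lt _ (Nat.lt_of_lt_of_le Nat.zero_lt_two hk)⟩)
    (hself : ∀ i < k, ∀ a < ℓ, ∀ b < ℓ, a ≠ b →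
      v ((i * ℓ + a : ℕ) : ZMod (k * ℓ)) ≠ v ((i * ℓ + b : ℕ) : ZMod (k * ℓ)))
    (hmeet : ∀ i < k, ∀ i' < k, i ≠ i' → ∀ a < ℓ, ∀ b < ℓ,
      v ((i * ℓ + a : ℕ) : ZMod (k * ℓ)) = v ((i' * ℓ + b : ℕ) : ZMod (k * ℓ)) →
      v ((i * ℓ + a : ℕ) : ZMod (k * ℓ)) ∈ Finset.univ.image s ∪ Finset.univ.image t) :
    Ctx k ℓ s t v := by
  have hk0 : 0 < k := by omega
  have hl0 : 0 < ℓ := by omega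
  have hdisj : ∀ a b : Fin k, s a ≠ t b := fun a b h =>
    Finset.disjoint_left.mp hst (Finset.mem_image_of_mem s (Finset.mem_univ a))
      (h ▸ Finset.mem_image_of_mem t (Finset.mem_univ b))
  have hS : ∀ x : ℕ, x % ℓ < k →
      VV k ℓ v x = s ⟨(x / ℓ + x % ℓ) % k, Nat.mod_lt _ hk0⟩ := by
    intro x hx
    have h1 := hvis_s (x / ℓ % k) (Nat.mod_lt _ hk0) ⟨x % ℓ, hx⟩
    have h2 : VV k ℓ v x = v (((x / ℓ % k) * ℓ + x % ℓ : ℕ) : ZMod (k * ℓ)) :=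
      VV_congr (modNEq k ℓ x)
    rw [h2, h1]
    refine congrArg s (Fin.ext ?_)
    simp only [Fin.val_mk]
    rw [Nat.mod_add_mod]
  have hT : ∀ x : ℕ, ℓ / 2 ≤ x % ℓ → x % ℓ < ℓ / 2 + k →
      VV k ℓ v x = t ⟨(x / ℓ + (x % ℓ - ℓ / 2)) % k, Nat.mod_lt _ hk0⟩ := by
    intro x hx1 hx2
    have h1 := hvis_t (x / ℓ % k) (Nat.mod_lt _ hk0) ⟨x % ℓ - ℓ / 2, by omega⟩
    have e : (x / ℓ % k) * ℓ + ℓ / 2 + (x % ℓ - ℓ / 2) = (x / ℓ % k) * ℓ + x % ℓ := by omega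
    rw [e] at h1
    have h2 : VV k ℓ v x = v (((x / ℓ % k) * ℓ + x % ℓ : ℕ) : ZMod (k * ℓ)) :=
      VV_congr (modNEq k ℓ x)
    rw [h2, h1]
    refine congrArg t (Fin.ext ?_)
    simp only [Fin.val_mk]
    rw [Nat.mod_add_mod]
  have hself' : ∀ x y : ℕ, x < k * ℓ → y < k * ℓ → x / ℓ = y / ℓ → x ≠ y →
      VV k ℓ v x ≠ VV k ℓ v y := by
    intro x y hx hy hd hne
    have hxd : x / ℓ < k := (Nat.div_lt_iff_lt_mul hl0).mpr hx
    have hx1 := Nat.div_add_mod' x ℓ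
    have hy1 := Nat.div_add_mod' y ℓ
    rw [hd] at hx1
    have hxm : x % ℓ < ℓ := Nat.mod_lt _ hl0
    have hym : y % ℓ < ℓ := Nat.mod_lt _ hl0
    have h := hself (x / ℓ) hxd (x % ℓ) hxm (y % ℓ) hym (by omega)
    have ex : x / ℓ * ℓ + x % ℓ = x := by rw [hd]; exact hx1
    have ey : x / ℓ * ℓ + y % ℓ = y := by rw [hd]; exact hy1
    rw [ex, ey] at h
    exact h
  have hmeet' : ∀ x y : ℕ, x < k * ℓ → y < k * ℓ → x / ℓ ≠ y / ℓ → VV k ℓ v x = VV k ℓ v y →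
      VV k ℓ v x ∈ Finset.univ.image s ∪ Finset.univ.image t := by
    intro x y hx hy hd heq
    have hxd : x / ℓ < k := (Nat.div_lt_iff_lt_mul hl0).mpr hx
    have hyd : y / ℓ < k := (Nat.div_lt_iff_lt_mul hl0).mpr hy
    have ex : x / ℓ * ℓ + x % ℓ = x := Nat.div_add_mod' x ℓ
    have ey : y / ℓ * ℓ + y % ℓ = y := Nat.div_add_mod' y ℓ
    have h := hmeet (x / ℓ) hxd (y / ℓ) hyd hd (x % ℓ) (Nat.mod_lt _ hl0)
      (y % ℓ) (Nat.mod_lt _ hl0)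
    rw [ex, ey] at h
    exact h heq
  have hkm : k ≤ ℓ / 2 := by
    by_contra hcon
    push_neg at hcon
    have hm1 : (ℓ / 2) % ℓ = ℓ / 2 := Nat.mod_eq_of_lt (by omega)
    have e1 := hS (ℓ / 2) (by rw [hm1]; omega)
    have e2 := hT (ℓ / 2) (by rw [hm1]) (by rw [hm1]; omega)
    exact hdisj _ _ (e1.symm.trans e2)
  have hkn : ℓ / 2 + k ≤ ℓ := by
    by_contra hcon
    push_neg at hcon
    have e1 := hS ℓ (by rw [Nat.mod_self]; omega)
    have e2 := hvis_t 0 hk0 ⟨ℓ - ℓ / 2, by omega⟩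
    have epos : 0 * ℓ + ℓ / 2 + (ℓ - ℓ / 2) = ℓ := by omega
    rw [epos] at e2
    have e2' : VV k ℓ v ℓ = t ⟨(0 + (ℓ - ℓ / 2)) % k, Nat.mod_lt _ (Nat.lt_of_lt_of_le Nat.zero_lt_two hk)⟩ := e2
    exact hdisj _ _ (e1.symm.trans e2')
  exact ⟨hk, hℓ, hs, ht, hst, hS, hT, hself', hmeet', hkm, hkn⟩

end Aux

/-- Let `T` be an `(ℓ-1, s⃗, t⃗)`-transporter in a `k`-graph `H`
(encoded by its cyclic vertex sequence `v : ZMod (k·ℓ) → V` satisfying the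
visiting, self-avoidance and meeting conditions). Then every edge
`e ∈ E(T) \ {s,t}` lies in exactly one sending and one receiving cycle of `T`,
`s` lies in exactly `k` sending and no receiving cycles, `t` in exactly `k`
receiving and no sending cycles; consequently, if `ω'` is obtained from `ω` by
using `T` with weight `w`, the total weight on each edge `e` changes by
`-w·𝟙[e = s] + w·𝟙[e = t]`. -/
theorem stmt13 (k ℓ : ℕ) (hk : 2 ≤ k) (hℓ : 4 ≤ ℓ)
    (E : Finset (Finset V)) (hE : ∀ e ∈ E, e.card = k)
    (s t : Fin k → V) (hs : Function.Injective s) (hsE : Finset.univ.image s ∈ E)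
    (ht : Function.Injective t) (htE : Finset.univ.image t ∈ E)
    (hst : Disjoint (Finset.univ.image s) (Finset.univ.image t))
    (v : ZMod (k * ℓ) → V)
    (hwalk : ∀ i : ℕ, win k ℓ v i ∈ E)
    (hvis_s : ∀ i < k, ∀ j : Fin k,
      v ((i * ℓ + j.1 : ℕ) : ZMod (k * ℓ)) = s ⟨(i + j.1) % k, Nat.mod_lt _ (by omega)⟩)
    (hvis_t : ∀ i < k, ∀ j : Fin k,
      v ((i * ℓ + ℓ / 2 + j.1 : ℕ) : ZMod (k * ℓ)) = t ⟨(i + j.1) % k, Nat.mod_lt _ (by omega)⟩)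
    (hself : ∀ i < k, ∀ a < ℓ, ∀ b < ℓ, a ≠ b →
      v ((i * ℓ + a : ℕ) : ZMod (k * ℓ)) ≠ v ((i * ℓ + b : ℕ) : ZMod (k * ℓ)))
    (hmeet : ∀ i < k, ∀ i' < k, i ≠ i' → ∀ a < ℓ, ∀ b < ℓ,
      v ((i * ℓ + a : ℕ) : ZMod (k * ℓ)) = v ((i' * ℓ + b : ℕ) : ZMod (k * ℓ)) →
      v ((i * ℓ + a : ℕ) : ZMod (k * ℓ)) ∈ Finset.univ.image s ∪ Finset.univ.image t)
    (ω ω' : Finset (Finset V) → ℝ) (w : ℝ) (hw : 0 ≤ w)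
    (hω' : ∀ C, ω' C = ω C + (w / (k : ℝ)) *
      ((((Finset.range k).filter fun i => RC k ℓ v i = C).card : ℝ) -
       (((Finset.range k).filter fun i => SC k ℓ v i = C).card : ℝ))) :
    (∀ e ∈ ET k ℓ v, e ≠ Finset.univ.image s → e ≠ Finset.univ.image t →
      ((Finset.range k).filter fun i => e ∈ SC k ℓ v i).card = 1 ∧
      ((Finset.range k).filter fun i => e ∈ RC k ℓ v i).card = 1) ∧
    (((Finset.range k).filter fun i => Finset.univ.image s ∈ SC k ℓ v i).card = k ∧
     ((Finset.range k).filter fun i => Finset.univ.image s ∈ RC k ℓ v i).card = 0) ∧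
    (((Finset.range k).filter fun i => Finset.univ.image t ∈ RC k ℓ v i).card = k ∧
     ((Finset.range k).filter fun i => Finset.univ.image t ∈ SC k ℓ v i).card = 0) ∧
    (∀ e ∈ E, ∑ C : Finset (Finset V), (if e ∈ C then ω' C else 0) =
      (∑ C : Finset (Finset V), (if e ∈ C then ω C else 0)) -
      (if e = Finset.univ.image s then w else 0) +
      (if e = Finset.univ.image t then w else 0)) := by
  have hc : Ctx k ℓ s t v := mkCtx hk hℓ hs ht hst hvis_s hvis_t hself hmeet
  have hl0 := hc.hl0
  have part1 : ∀ e ∈ ET k ℓ v, e ≠ Finset.univ.image s → e ≠ Finset.univ.image t →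
      ((Finset.range k).filter fun i => e ∈ SC k ℓ v i).card = 1 ∧
      ((Finset.range k).filter fun i => e ∈ RC k ℓ v i).card = 1 := by
    intro e he hes het
    obtain ⟨p₀, hp₀r, hw'⟩ := Finset.mem_image.mp he
    have hp₀ : p₀ < k * ℓ := Finset.mem_range.mp hp₀r
    subst hw'
    have h0 : p₀ % ℓ ≠ 0 := fun h => hes (hc.LSwin p₀ h)
    have hm : p₀ % ℓ ≠ ℓ / 2 := fun h => het (hc.LTwin p₀ h)
    exact ⟨hc.count_SC hp₀ h0 hm, hc.count_RC hp₀ h0 hm⟩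
  refine ⟨part1, ⟨hc.count_S_SC, hc.count_S_RC⟩, ⟨hc.count_T_RC, hc.count_T_SC⟩, ?_⟩
  intro e _
  have hkR : (k : ℝ) ≠ 0 := Nat.cast_ne_zero.mpr (by omega)
  have key : ∀ F : ℕ → Finset (Finset V),
      (∑ C : Finset (Finset V),
        if e ∈ C then (((Finset.range k).filter fun i => F i = C).card : ℝ) else 0)
        = (((Finset.range k).filter fun i => e ∈ F i).card : ℝ) := by
    intro F
    have h1 : ∀ C : Finset (Finset V),
        (if e ∈ C then (((Finset.range k).filter fun i => F i = C).card : ℝ) else 0)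
          = ∑ i ∈ Finset.range k, (if C = F i then (if e ∈ F i then (1 : ℝ) else 0) else 0) := by
      intro C
      by_cases hC : e ∈ C
      · rw [if_pos hC, Finset.card_filter]
        push_cast
        refine Finset.sum_congr rfl fun i _ => ?_
        by_cases hFC : F i = C
        · rw [if_pos hFC, if_pos hFC.symm, if_pos (by rw [hFC]; exact hC)]
        · rw [if_neg hFC, if_neg (fun hh => hFC hh.symm)]
      · rw [if_neg hC]
        refine (Finset.sum_eq_zero fun i _ => ?_).symm
        by_cases hFC : C = F i
        · rw [if_pos hFC, if_neg (by rw [hFC] at hC; exact hC)]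
        · rw [if_neg hFC]
    rw [Finset.sum_congr rfl fun C _ => h1 C, Finset.sum_comm]
    rw [Finset.sum_congr rfl fun i _ => Finset.sum_ite_eq' Finset.univ (F i) _]
    simp only [Finset.mem_univ, if_true]
    rw [Finset.sum_boole]
  have expand : (∑ C : Finset (Finset V), if e ∈ C then ω' C else 0)
      = (∑ C : Finset (Finset V), if e ∈ C then ω C else 0)
        + (w / (k : ℝ)) * ((((Finset.range k).filter fun i => e ∈ RC k ℓ v i).card : ℝ)
          - (((Finset.range k).filter fun i => e ∈ SC k ℓ v i).card : ℝ)) := by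
    have hsplit : ∀ C : Finset (Finset V), (if e ∈ C then ω' C else 0)
        = (if e ∈ C then ω C else 0)
          + (w / (k : ℝ)) *
            ((if e ∈ C then (((Finset.range k).filter fun i => RC k ℓ v i = C).card : ℝ) else 0)
            - (if e ∈ C then (((Finset.range k).filter fun i => SC k ℓ v i = C).card : ℝ) else 0)) := by
      intro C
      by_cases hC : e ∈ C
      · simp only [hC, if_true]
        rw [hω' C]
      · simp only [hC, if_false]
        ring
    rw [Finset.sum_congr rfl fun C _ => hsplit C, Finset.sum_add_distrib]
    congr 1
    rw [← Finset.mul_sum, Finset.sum_sub_distrib, key (RC k ℓ v), key (SC k ℓ v)]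
  rw [expand]
  rcases eq_or_ne e (Finset.univ.image s) with rfl | hes
  · rw [if_pos rfl, if_neg hc.SneT, hc.count_S_SC, hc.count_S_RC]
    push_cast
    field_simp
    ring
  · rcases eq_or_ne e (Finset.univ.image t) with rfl | het
    · rw [if_neg hes, if_pos rfl, hc.count_T_RC, hc.count_T_SC]
      push_cast
      field_simp
      try ring
    · rw [if_neg hes, if_neg het]
      by_cases hET : e ∈ ET k ℓ v
      · obtain ⟨h1, h2⟩ := part1 e hET hes het
        rw [h1, h2]
        push_cast
        ring
      · have hA : ((Finset.range k).filter fun i => e ∈ RC k ℓ v i) = ∅ :=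
          Finset.filter_eq_empty_iff.mpr fun i _ hm => hET (hc.RC_sub_ET hm)
        have hB : ((Finset.range k).filter fun i => e ∈ SC k ℓ v i) = ∅ :=
          Finset.filter_eq_empty_iff.mpr fun i _ hm => hET (hc.SC_sub_ET hm)
        rw [hA, hB]
        push_cast
        ring


end Stmt13
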